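/- Let k ≥ 1 and let g : S¹ → ℂ^k be the map g(z) = (z, z³, z⁵, …, z^{2k−1}) on the unit circle S¹ ⊆ ℂ (evaluation of the odd monomials of degree ≤ 2k−1). If w₀, …, w_{2k} are points of S¹ such that 0 lies in the convex hull (taken in ℂ^k regarded as a real vector space) of g(w₀), …, g(w_{2k}), then d(wᵢ, wⱼ) ≥ π − π/(2k+1) for some indices i ≠ j. -/

import Mathlib

open Complex Finset



private lemma re_mul_re (z v : ℂ) : 2 * (z.re * v.re) = (z*v).re + (z * (starRingEnd ℂ) v).re := by
  simp [Complex.mul_re, Complex.conj_re, Complex.conj_im]; ring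

private lemma conj_re_eq (z : ℂ) : ((starRingEnd ℂ) z).re = z.re := Complex.conj_re z

private lemma prodIm (n : ℕ) (u : Fin n → ℂ) :
    ∃ c : ℕ → ℂ, (∀ j, j % 2 ≠ n % 2 → c j = 0) ∧ (∀ j, n < j → c j = 0) ∧
      ∀ w : ℂ, ‖w‖ = 1 → ∏ m, (w * u m).im = ∑ j ∈ range (n+1), (c j * w^j).re := by
  induction n with
  | zero =>
    refine ⟨fun j => if j = 0 then 1 else 0, ?_, ?_, ?_⟩
    · intro j hj
      have : j ≠ 0 := by rintro rfl; simp at hj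
      simp [this]
    · intro j hj
      have : j ≠ 0 := by omega
      simp [this]
    · intro w _; simp
  | succ n ih =>
    obtain ⟨c, hpar, hsupp, hc⟩ := ih (u ∘ Fin.castSucc)
    set d : ℂ := -Complex.I * u (Fin.last n) with hd
    refine ⟨fun j => (1/2 : ℂ) * ((if j = 0 then 0 else c (j-1) * d
        + (if j = 1 then (starRingEnd ℂ) (c 0) * d else 0)) + c (j+1) * (starRingEnd ℂ) d),
        ?_, ?_, ?_⟩
    · intro j hj
      have h1 : c (j+1) = 0 := by
        rcases eq_or_ne ((j+1) % 2) (n % 2) with h | h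
        · omega
        · exact hpar _ h
      rcases eq_or_ne j 0 with rfl | hj0
      · simp [h1]
      have h2 : c (j-1) = 0 := by
        rcases eq_or_ne ((j-1) % 2) (n % 2) with h | h
        · omega
        · exact hpar _ h
      have h3 : j ≠ 1 ∨ c 0 = 0 := by
        rcases eq_or_ne j 1 with rfl | h
        · right
          rcases eq_or_ne (0 % 2) (n % 2) with h | h
          · omega
          · exact hpar _ h
        · left; exact h
      rcases h3 with h3 | h3
      · simp [hj0, h3, h1, h2]
      · simp [hj0, h1, h2, h3]
    · intro j hj
      have h1 : c (j+1) = 0 := hsupp _ (by omega)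
      have h2 : c (j-1) = 0 := hsupp _ (by omega)
      have h3 : j ≠ 1 := by omega
      have h0 : j ≠ 0 := by omega
      simp [h0, h3, h1, h2]
    · intro w hw
      have hw1 : w * (starRingEnd ℂ) w = 1 := by
        rw [Complex.mul_conj]
        norm_cast
        rw [Complex.normSq_eq_norm_sq, hw]; norm_num
      have hsplit : ∏ m : Fin (n+1), (w * u m).im
          = (∏ m : Fin n, (w * (u ∘ Fin.castSucc) m).im) * (d * w).re := by
        rw [Fin.prod_univ_castSucc]
        congr 1
        rw [hd]
        simp [Complex.mul_re, Complex.mul_im, Complex.I_re, Complex.I_im]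
        ring
      rw [hsplit, hc w hw]
      have key : ∀ j : ℕ, 2 * ((c j * w^j).re * (d * w).re)
          = (c j * d * w^(j+1)).re
            + (if j = 0 then ((starRingEnd ℂ) (c 0) * d * w).re
               else (c j * (starRingEnd ℂ) d * w^(j-1)).re) := by
        intro j
        rw [re_mul_re]
        rcases eq_or_ne j 0 with rfl | hj0
        · simp only [if_pos rfl, pow_zero, mul_one]
          congr 1
          · congr 1; rw [zero_add, pow_one]; ring
          · rw [← conj_re_eq (c 0 * (starRingEnd ℂ) (d * w))]
            congr 1
            rw [map_mul, Complex.conj_conj]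
            ring
        · simp only [if_neg hj0]
          congr 1
          · congr 1; ring
          · have hwj : w ^ j = w^(j-1) * w := by
              rw [← pow_succ]; congr 1; omega
            have : c j * w ^ j * (starRingEnd ℂ) (d * w)
                = (c j * (starRingEnd ℂ) d * w^(j-1)) * (w * (starRingEnd ℂ) w) := by
              rw [hwj, map_mul]; ring
            rw [this, hw1, mul_one]
      -- abbreviations
      set T0 : ℝ := ((starRingEnd ℂ) (c 0) * d * w).re with hT0
      have lhs_eq : 2 * ((∑ j ∈ range (n+1), (c j * w^j).re) * (d * w).re)
          = (∑ j ∈ range (n+1), (c j * d * w^(j+1)).re)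
            + ((∑ i ∈ range n, (c (i+1) * (starRingEnd ℂ) d * w^i).re) + T0) := by
        rw [Finset.sum_mul, Finset.mul_sum]
        rw [show (∑ j ∈ range (n+1), 2 * ((c j * w ^ j).re * (d * w).re))
            = ∑ j ∈ range (n+1), ((c j * d * w^(j+1)).re
              + (if j = 0 then T0 else (c j * (starRingEnd ℂ) d * w^(j-1)).re)) from
          Finset.sum_congr rfl fun j _ => key j]
        have hite : (∑ j ∈ range (n+1), (if j = 0 then T0
                 else (c j * (starRingEnd ℂ) d * w^(j-1)).re))
            = (∑ i ∈ range n, (c (i+1) * (starRingEnd ℂ) d * w^i).re) + T0 := by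
          rw [Finset.sum_range_succ']
          simp
        rw [Finset.sum_add_distrib, hite]
      have step1 : ∀ j : ℕ, 2 * (((1/2 : ℂ) * ((if j = 0 then 0 else c (j-1) * d
            + (if j = 1 then (starRingEnd ℂ) (c 0) * d else 0)) + c (j+1) * (starRingEnd ℂ) d) * w^j).re)
            = (((if j = 0 then 0 else c (j-1) * d
            + (if j = 1 then (starRingEnd ℂ) (c 0) * d else 0)) * w^j).re
              + (c (j+1) * (starRingEnd ℂ) d * w^j).re) := by
        intro j
        have h2 : ((if j = 0 then 0 else c (j-1) * d
            + (if j = 1 then (starRingEnd ℂ) (c 0) * d else 0)) * w^j)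
              + (c (j+1) * (starRingEnd ℂ) d * w^j)
            = ((1/2 : ℂ) * ((if j = 0 then 0 else c (j-1) * d
            + (if j = 1 then (starRingEnd ℂ) (c 0) * d else 0)) + c (j+1) * (starRingEnd ℂ) d) * w^j)
              + ((1/2 : ℂ) * ((if j = 0 then 0 else c (j-1) * d
            + (if j = 1 then (starRingEnd ℂ) (c 0) * d else 0)) + c (j+1) * (starRingEnd ℂ) d) * w^j) := by
          ring
        have h3 := congrArg Complex.re h2
        rw [Complex.add_re, Complex.add_re] at h3
        linarith
      have hA : (∑ j ∈ range (n+1+1), ((if j = 0 then 0 else c (j-1) * d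
            + (if j = 1 then (starRingEnd ℂ) (c 0) * d else 0)) * w^j).re)
          = (∑ j ∈ range (n+1), (c j * d * w^(j+1)).re) + T0 := by
        rw [Finset.sum_range_succ']
        rw [if_pos (rfl : (0:ℕ) = 0), zero_mul, Complex.zero_re, add_zero]
        have hterm : ∀ i ∈ range (n+1), (((if i + 1 = 0 then 0 else c (i+1-1) * d
            + (if i + 1 = 1 then (starRingEnd ℂ) (c 0) * d else 0)) * w^(i+1)).re)
            = (c i * d * w^(i+1)).re + (if i = 0 then T0 else 0) := by
          intro i _
          have h1 : i + 1 ≠ 0 := by omega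
          rcases eq_or_ne i 0 with rfl | hi
          · rw [if_neg h1, if_pos rfl, if_pos rfl, Nat.add_sub_cancel, hT0, ← Complex.add_re]
            congr 1
            rw [zero_add, pow_one]
            ring
          · have h2 : i + 1 ≠ 1 := by omega
            rw [if_neg h1, if_neg h2, if_neg hi, add_zero, add_zero, Nat.add_sub_cancel]
        rw [Finset.sum_congr rfl hterm, Finset.sum_add_distrib]
        congr 1
        rw [Finset.sum_ite_eq' (range (n+1)) 0 (fun _ => T0)]
        simp
      have hB : (∑ j ∈ range (n+1+1), (c (j+1) * (starRingEnd ℂ) d * w^j).re)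
          = ∑ i ∈ range n, (c (i+1) * (starRingEnd ℂ) d * w^i).re := by
        rw [Finset.sum_range_succ, Finset.sum_range_succ]
        have e1 : c (n + 1) = 0 := hsupp _ (by omega)
        have e2 : c (n + 1 + 1) = 0 := hsupp _ (by omega)
        simp [e1, e2]
      have rhs_eq : 2 * (∑ j ∈ range (n+1+1), ((1/2 : ℂ) * ((if j = 0 then 0 else c (j-1) * d
            + (if j = 1 then (starRingEnd ℂ) (c 0) * d else 0)) + c (j+1) * (starRingEnd ℂ) d) * w^j).re)
          = (∑ j ∈ range (n+1), (c j * d * w^(j+1)).re)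
            + ((∑ i ∈ range n, (c (i+1) * (starRingEnd ℂ) d * w^i).re) + T0) := by
        rw [Finset.mul_sum]
        rw [Finset.sum_congr rfl fun j _ => step1 j, Finset.sum_add_distrib, hA, hB]
        ring
      linarith [lhs_eq, rhs_eq]


private lemma abs_arg_neg_exp (δ : ℝ) (h0 : 0 ≤ δ) (h1 : δ ≤ Real.pi) :
    |Complex.arg (-Complex.exp (δ * Complex.I))| = Real.pi - δ := by
  rcases eq_or_lt_of_le h0 with h | h
  · rw [← h]
    simp only [Complex.ofReal_zero, zero_mul, Complex.exp_zero, Complex.arg_neg_one]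
    rw [_root_.abs_of_nonneg Real.pi_pos.le]
    ring
  · have hmem : δ - Real.pi ∈ Set.Ioc (-Real.pi) Real.pi := ⟨by linarith, by linarith [Real.pi_pos]⟩
    have he : -Complex.exp (↑δ * Complex.I)
        = Complex.cos (↑(δ - Real.pi)) + Complex.sin (↑(δ - Real.pi)) * Complex.I := by
      rw [← Complex.exp_mul_I]
      have h2 : ((δ - Real.pi : ℝ) : ℂ) * Complex.I = ↑δ * Complex.I + (-(↑Real.pi * Complex.I)) := by
        push_cast; ring
      rw [h2, Complex.exp_add, Complex.exp_neg, Complex.exp_pi_mul_I]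
      norm_num
    rw [he, Complex.arg_cos_add_sin_mul_I hmem, _root_.abs_of_nonpos (by linarith)]
    ring

private lemma abs_arg_exp_of (δ x : ℝ) (h0 : 0 ≤ δ) (h1 : δ ≤ Real.pi)
    (hx : x = δ - Real.pi ∨ x = δ + Real.pi) :
    |Complex.arg (Complex.exp (↑x * Complex.I))| = Real.pi - δ := by
  have key : Complex.exp (↑x * Complex.I) = -Complex.exp (↑δ * Complex.I) := by
    rcases hx with rfl | rfl
    · have h2 : ((δ - Real.pi : ℝ) : ℂ) * Complex.I = ↑δ * Complex.I + (-(↑Real.pi * Complex.I)) := by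
        push_cast; ring
      rw [h2, Complex.exp_add, Complex.exp_neg, Complex.exp_pi_mul_I]
      norm_num
    · have h2 : ((δ + Real.pi : ℝ) : ℂ) * Complex.I = ↑δ * Complex.I + (↑Real.pi * Complex.I) := by
        push_cast; ring
      rw [h2, Complex.exp_add, Complex.exp_pi_mul_I]
      ring
  rw [key]
  exact abs_arg_neg_exp δ h0 h1

private lemma sum_range_two_mul (N : ℕ) (F : ℕ → ℝ) :
    ∑ i ∈ range (2*N), F i = ∑ j ∈ range N, (F (2*j) + F (2*j+1)) := by
  induction N with
  | zero => simp
  | succ N ih =>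
    have h2 : 2*(N+1) = (2*N + 1) + 1 := by ring
    rw [h2, Finset.sum_range_succ, Finset.sum_range_succ, ih, Finset.sum_range_succ]
    ring
private lemma sep (k : ℕ) (hk : 1 ≤ k) (w : Fin (2*k+1) → ℂ) (hw : ∀ i, ‖w i‖ = 1)
    (hlt : ∀ i j, i ≠ j → |Complex.arg (w j / w i)| < Real.pi - Real.pi/(2*(k:ℝ)+1)) :
    ∃ c : Fin k → ℂ, ∀ i, 0 < (∑ j : Fin k, (c j * (w i)^(2*(j:ℕ)+1))).re := by
  classical
  set D := Real.pi - Real.pi/(2*(k:ℝ)+1) with hD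
  have hK1 : (1:ℝ) < 2*(k:ℝ)+1 := by
    have : (1:ℝ) ≤ (k:ℝ) := by exact_mod_cast hk
    linarith
  have hquotpos : 0 < Real.pi/(2*(k:ℝ)+1) := div_pos Real.pi_pos (by linarith)
  have hDpos : 0 < D := by
    have h2 : Real.pi/(2*(k:ℝ)+1) < Real.pi := div_lt_self Real.pi_pos hK1
    rw [hD]; linarith
  have hDltpi : D < Real.pi := by rw [hD]; linarith
  have hw0 : w 0 ≠ 0 := by
    intro h
    have h2 := hw 0
    rw [h] at h2; simp at h2
  -- angles relative to w 0
  set θ : Fin (2*k+1) → ℝ := fun i => Complex.arg (w i / w 0) with hθdef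
  have hθ0 : θ 0 = 0 := by
    rw [hθdef]; simp [div_self hw0]
  have hθlt : ∀ i, |θ i| < D := by
    intro i
    rcases eq_or_ne i 0 with rfl | hi
    · rw [hθ0]; simpa using hDpos
    · exact hlt 0 i (Ne.symm hi)
  have hθpi : ∀ i, |θ i| < Real.pi := fun i => lt_trans (hθlt i) hDltpi
  have hwi : ∀ i, w i = w 0 * Complex.exp (↑(θ i) * Complex.I) := by
    intro i
    have habs : ‖w i / w 0‖ = 1 := by
      rw [norm_div, hw i, hw 0]; norm_num
    have h2 := Complex.norm_mul_exp_arg_mul_I (w i / w 0)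
    rw [habs, Complex.ofReal_one, one_mul] at h2
    rw [hθdef]
    simp only []
    rw [h2]
    field_simp
  have hquot : ∀ i j : Fin (2*k+1), w j / w i = Complex.exp (↑(θ j - θ i) * Complex.I) := by
    intro i j
    rw [hwi i, hwi j, mul_div_mul_left _ _ hw0, ← Complex.exp_sub]
    congr 1
    push_cast
    ring
  -- lift to [0, π)
  set φ : Fin (2*k+1) → ℝ := fun i => if θ i < 0 then θ i + Real.pi else θ i with hφdef
  have hφb : ∀ i, 0 ≤ φ i ∧ φ i < Real.pi := by
    intro i
    have h2 := abs_lt.mp (hθpi i)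
    simp only [hφdef]
    split_ifs with h
    · constructor <;> linarith [h2.1, h2.2]
    · push_neg at h
      constructor <;> linarith [h2.2]
  have hθφ : ∀ i, θ i = φ i - (if θ i < 0 then Real.pi else 0) := by
    intro i
    simp only [hφdef]
    split_ifs with h <;> ring
  -- sort
  set σ : Equiv.Perm (Fin (2*k+1)) := Tuple.sort φ with hσdef
  set ψ : Fin (2*k+1) → ℝ := fun t => φ (σ t) with hψdef
  have hψmono : ∀ a b : Fin (2*k+1), (a:ℕ) ≤ (b:ℕ) → ψ a ≤ ψ b := by
    intro a b h
    exact Tuple.monotone_sort φ (Fin.le_def.mpr h)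
  have hψ0 : ∀ t, 0 ≤ ψ t := fun t => (hφb (σ t)).1
  have hψπ : ∀ t, ψ t < Real.pi := fun t => (hφb (σ t)).2
  -- signs
  set s : Fin (2*k+1) → ℝ := fun t => if θ (σ t) < 0 then (-1:ℝ) else 1 with hsdef
  have hs1 : ∀ t, s t = 1 ∨ s t = -1 := by
    intro t
    simp only [hsdef]
    split_ifs
    · right; rfl
    · left; rfl
  have hssq : ∀ t, s t * s t = 1 := by
    intro t; rcases hs1 t with h | h <;> rw [h] <;> norm_num
  have hsne : ∀ t, s t ≠ 0 := by
    intro t; rcases hs1 t with h | h <;> rw [h] <;> norm_num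
  -- Fin arithmetic
  have hval1 : ((1 : Fin (2*k+1)):ℕ) = 1 := by
    rw [Fin.val_one', Nat.mod_eq_of_lt (by omega)]
  have hval0 : ((0 : Fin (2*k+1)):ℕ) = 0 := rfl
  have hfneq : ∀ (a b : ℝ), (fun r : Fin (2*k+1) => if (r:ℕ) = 2*k then a else b)
      = fun r => if r = (⟨2*k, by omega⟩ : Fin (2*k+1)) then a else b := by
    intro a b
    funext r
    by_cases h : (r:ℕ) = 2*k
    · rw [if_pos h, if_pos (Fin.ext h)]
    · rw [if_neg h, if_neg (fun hc => h (congrArg Fin.val hc))]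
  have hvaladd : ∀ r : Fin (2*k+1), (r:ℕ) ≠ 2*k → ((r+1 : Fin (2*k+1)):ℕ) = (r:ℕ)+1 := by
    intro r hr
    have h2 := r.isLt
    rw [Fin.val_add, hval1, Nat.mod_eq_of_lt (by omega)]
  have hlastadd : ∀ r : Fin (2*k+1), (r:ℕ) = 2*k → r + 1 = 0 := by
    intro r hr
    apply Fin.ext
    rw [Fin.val_add, hval1, hr, Fin.val_zero, Nat.mod_self]
  have hrne : ∀ r : Fin (2*k+1), r ≠ r + 1 := by
    intro r h
    by_cases hr : (r:ℕ) = 2*k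
    · have h2 := hlastadd r hr
      rw [← h] at h2
      rw [h2] at hr
      simp at hr
      omega
    · have h2 := hvaladd r hr
      rw [← h] at h2
      omega
  -- gaps, midpoints, parity indicators
  set W : Fin (2*k+1) → ℝ := fun r => if (r:ℕ) = 2*k then Real.pi else 0 with hWdef
  set δf : Fin (2*k+1) → ℝ := fun r => W r + ψ (r+1) - ψ r with hδdef
  set mid : Fin (2*k+1) → ℝ := fun r => (ψ r + ψ (r+1) + W r)/2 with hmiddef
  set x : Fin (2*k+1) → ℝ := fun r => (if (r:ℕ) = 2*k then (-1:ℝ) else 1) * (s r * s (r+1)) with hxdef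
  set Inc : Finset (Fin (2*k+1)) := Finset.univ.filter (fun r => x r < 0) with hIncdef
  have hIncmem : ∀ r, r ∈ Inc ↔ x r < 0 := by
    intro r
    rw [hIncdef, Finset.mem_filter]
    simp
  have hx1 : ∀ r, x r = 1 ∨ x r = -1 := by
    intro r
    simp only [hxdef]
    rcases hs1 r with h | h <;> rcases hs1 (r+1) with h' | h' <;> rw [h, h'] <;>
      split_ifs <;> norm_num
  have hxneg : ∀ r, r ∈ Inc → x r = -1 := by
    intro r hr
    rcases hx1 r with h | h
    · rw [hIncmem] at hr; rw [h] at hr; norm_num at hr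
    · exact h
  have hxpos : ∀ r, r ∉ Inc → x r = 1 := by
    intro r hr
    rcases hx1 r with h | h
    · exact h
    · rw [hIncmem] at hr; rw [h] at hr; norm_num at hr
  -- product of x is -1
  have hprodx : ∏ r : Fin (2*k+1), x r = -1 := by
    have h1 : ∏ r : Fin (2*k+1), x r
        = (∏ r : Fin (2*k+1), (if (r:ℕ) = 2*k then (-1:ℝ) else 1))
          * ((∏ r : Fin (2*k+1), s r) * (∏ r : Fin (2*k+1), s (r+1))) := by
      rw [← Finset.prod_mul_distrib, ← Finset.prod_mul_distrib]
    have h2 : ∏ r : Fin (2*k+1), s (r+1) = ∏ r : Fin (2*k+1), s r :=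
      Fintype.prod_equiv (Equiv.addRight 1) _ _ (fun r => rfl)
    have h3 : ∏ r : Fin (2*k+1), (if (r:ℕ) = 2*k then (-1:ℝ) else 1) = -1 := by
      rw [hfneq (-1:ℝ) 1, Finset.prod_ite_eq' Finset.univ (⟨2*k, by omega⟩ : Fin (2*k+1)) (fun _ => (-1:ℝ))]
      simp
    have h4 : (∏ r : Fin (2*k+1), s r) * (∏ r : Fin (2*k+1), s r) = 1 := by
      rw [← Finset.prod_mul_distrib]
      exact Finset.prod_eq_one fun t _ => hssq t
    rw [h1, h2, h3, h4]
    norm_num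
  have hIodd : Odd Inc.card := by
    have hsplit := (Finset.prod_filter_mul_prod_filter_not Finset.univ (fun r => x r < 0) x)
    have hA : ∏ r ∈ Inc, x r = (-1:ℝ)^Inc.card := by
      rw [Finset.prod_congr rfl (fun r hr => hxneg r hr), Finset.prod_const]
    have hB : ∏ r ∈ Finset.univ.filter (fun r => ¬ x r < 0), x r = 1 := by
      apply Finset.prod_eq_one
      intro r hr
      apply hxpos
      rw [hIncmem]
      exact (Finset.mem_filter.mp hr).2
    rw [← hIncdef] at hsplit
    rw [hA, hB, mul_one] at hsplit
    rw [hprodx] at hsplit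
    by_contra hodd
    rw [Nat.not_odd_iff_even] at hodd
    rw [hodd.neg_one_pow] at hsplit
    norm_num at hsplit
  -- gap bounds
  have hδ0 : ∀ r, 0 ≤ δf r := by
    intro r
    simp only [hδdef, hWdef]
    by_cases hr : (r:ℕ) = 2*k
    · rw [if_pos hr, hlastadd r hr]
      have := hψπ r
      have := hψ0 (0 : Fin (2*k+1))
      linarith
    · rw [if_neg hr]
      have := hψmono r (r+1) (by rw [hvaladd r hr]; omega)
      linarith
  have hδπ : ∀ r, δf r ≤ Real.pi := by
    intro r
    simp only [hδdef, hWdef]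
    by_cases hr : (r:ℕ) = 2*k
    · rw [if_pos hr, hlastadd r hr]
      have := hψmono 0 r (by rw [hval0]; omega)
      linarith
    · rw [if_neg hr]
      have := hψπ (r+1)
      have := hψ0 r
      linarith
  have hsumδ : ∑ r : Fin (2*k+1), δf r = Real.pi := by
    have h1 : ∑ r : Fin (2*k+1), δf r
        = (∑ r : Fin (2*k+1), W r) + ((∑ r : Fin (2*k+1), ψ (r+1)) - ∑ r : Fin (2*k+1), ψ r) := by
      rw [← Finset.sum_sub_distrib, ← Finset.sum_add_distrib]
      apply Finset.sum_congr rfl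
      intro r _
      ring
    have h2 : ∑ r : Fin (2*k+1), ψ (r+1) = ∑ r : Fin (2*k+1), ψ r :=
      Fintype.sum_equiv (Equiv.addRight 1) _ _ (fun r => rfl)
    have h3 : ∑ r : Fin (2*k+1), W r = Real.pi := by
      simp only [hWdef]
      rw [hfneq Real.pi 0, Finset.sum_ite_eq' Finset.univ (⟨2*k, by omega⟩ : Fin (2*k+1)) (fun _ => Real.pi)]
      simp
    rw [h1, h2, h3]
    ring
  -- incompatible gaps are large
  have hsvalneg : ∀ t, θ (σ t) < 0 → s t = -1 := by
    intro t h
    simp only [hsdef]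
    rw [if_pos h]
  have hsvalpos : ∀ t, ¬ θ (σ t) < 0 → s t = 1 := by
    intro t h
    simp only [hsdef]
    rw [if_neg h]
  have hEneg : ∀ i, θ i < 0 → θ i = φ i - Real.pi := by
    intro i h
    have h2 := hθφ i
    rw [if_pos h] at h2
    exact h2
  have hEpos : ∀ i, ¬ θ i < 0 → θ i = φ i := by
    intro i h
    have h2 := hθφ i
    rw [if_neg h] at h2
    simpa using h2
  have hIncδ : ∀ r ∈ Inc, Real.pi/(2*(k:ℝ)+1) < δf r := by
    intro r hr
    have hxr : x r = -1 := hxneg r hr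
    have hdiff : θ (σ (r+1)) - θ (σ r) = δf r - Real.pi
        ∨ θ (σ (r+1)) - θ (σ r) = δf r + Real.pi := by
      by_cases hwr : (r:ℕ) = 2*k
      · have hx2 : x r = -1 * (s r * s (r+1)) := by
          simp only [hxdef]
          rw [if_pos hwr]
        have hss : s r * s (r+1) = 1 := by
          rw [hx2] at hxr
          linarith
        have hδval : δf r = Real.pi + ψ (r+1) - ψ r := by
          simp only [hδdef, hWdef]
          rw [if_pos hwr]
        by_cases h1 : θ (σ r) < 0 <;> by_cases h2 : θ (σ (r+1)) < 0
        · left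
          rw [hEneg _ h1, hEneg _ h2, hδval]
          simp only [hψdef]
          ring
        · exfalso
          rw [hsvalneg _ h1, hsvalpos _ h2] at hss
          norm_num at hss
        · exfalso
          rw [hsvalpos _ h1, hsvalneg _ h2] at hss
          norm_num at hss
        · left
          rw [hEpos _ h1, hEpos _ h2, hδval]
          simp only [hψdef]
          ring
      · have hx2 : x r = s r * s (r+1) := by
          simp only [hxdef]
          rw [if_neg hwr, one_mul]
        have hss : s r * s (r+1) = -1 := by rw [← hx2]; exact hxr
        have hδval : δf r = ψ (r+1) - ψ r := by
          simp only [hδdef, hWdef]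
          rw [if_neg hwr]
          ring
        by_cases h1 : θ (σ r) < 0 <;> by_cases h2 : θ (σ (r+1)) < 0
        · exfalso
          rw [hsvalneg _ h1, hsvalneg _ h2] at hss
          norm_num at hss
        · right
          rw [hEneg _ h1, hEpos _ h2, hδval]
          simp only [hψdef]
          ring
        · left
          rw [hEpos _ h1, hEneg _ h2, hδval]
          simp only [hψdef]
          ring
        · exfalso
          rw [hsvalpos _ h1, hsvalpos _ h2] at hss
          norm_num at hss
    have harg : |Complex.arg (w (σ (r+1)) / w (σ r))| = Real.pi - δf r := by
      rw [hquot]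
      exact abs_arg_exp_of (δf r) _ (hδ0 r) (hδπ r) hdiff
    have hne : σ r ≠ σ (r+1) := fun h => hrne r (σ.injective h)
    have h9 := hlt (σ r) (σ (r+1)) hne
    rw [harg, hD] at h9
    linarith
  -- the number of incompatible gaps
  have hcardle : Inc.card ≤ 2*k := by
    by_contra hcon
    push_neg at hcon
    have hle : Inc.card ≤ 2*k+1 := by
      have := Finset.card_filter_le Finset.univ (fun r => x r < 0)
      rw [← hIncdef] at this
      simpa using this
    have hcard : Inc.card = 2*k+1 := by omega
    have huniv : Inc = Finset.univ := Finset.eq_univ_of_card Inc (by rw [hcard]; simp)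
    have hstrict : ∑ r : Fin (2*k+1), Real.pi/(2*(k:ℝ)+1) < ∑ r : Fin (2*k+1), δf r := by
      apply Finset.sum_lt_sum_of_nonempty
      · exact Finset.univ_nonempty
      · intro r _
        apply hIncδ
        rw [huniv]
        exact Finset.mem_univ r
    rw [hsumδ] at hstrict
    rw [Finset.sum_const, Finset.card_univ, Fintype.card_fin] at hstrict
    rw [nsmul_eq_mul] at hstrict
    have hcast : ((2*k+1 : ℕ):ℝ) = 2*(k:ℝ)+1 := by push_cast; ring
    rw [hcast] at hstrict
    rw [mul_div_cancel₀ _ (by linarith : 2*(k:ℝ)+1 ≠ 0)] at hstrict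
    linarith
  -- sign facts for sine factors
  have hfacneg : ∀ r ∈ Inc, ∀ t : Fin (2*k+1), ((r:ℕ) = 2*k ∨ (t:ℕ) ≤ (r:ℕ)) →
      Real.sin (ψ t - mid r) < 0 := by
    intro r hr t hcase
    have hgap := hIncδ r hr
    apply Real.sin_neg_of_neg_of_neg_pi_lt
    · -- ψ t - mid r < 0
      rcases hcase with hwr | hle
      · simp only [hmiddef, hWdef]
        rw [if_pos hwr, hlastadd r hwr]
        have h1 := hψmono t r (by rw [hwr]; have := t.isLt; omega)
        have h2 := hψπ t
        have h3 := hψ0 (0 : Fin (2*k+1))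
        linarith
      · by_cases hwr : (r:ℕ) = 2*k
        · simp only [hmiddef, hWdef]
          rw [if_pos hwr, hlastadd r hwr]
          have h1 := hψmono t r (by rw [hwr]; have := t.isLt; omega)
          have h2 := hψπ t
          have h3 := hψ0 (0 : Fin (2*k+1))
          linarith
        · simp only [hmiddef, hWdef]
          rw [if_neg hwr]
          have h1 := hψmono t r hle
          have h2 : ψ (r+1) - ψ r > 0 := by
            have h3 : δf r = ψ (r+1) - ψ r := by
              simp only [hδdef, hWdef]; rw [if_neg hwr]; ring
            rw [h3] at hgap
            linarith
          linarith
    · -- -π < ψ t - mid r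
      by_cases hwr : (r:ℕ) = 2*k
      · simp only [hmiddef, hWdef]
        rw [if_pos hwr, hlastadd r hwr]
        have h1 := hψmono 0 t (by rw [hval0]; omega)
        have h2 := hψπ r
        have h3 := hψ0 t
        linarith
      · simp only [hmiddef, hWdef]
        rw [if_neg hwr]
        have h1 := hψπ r
        have h2 := hψπ (r+1)
        have h3 := hψ0 t
        linarith
  have hfacpos : ∀ r ∈ Inc, ∀ t : Fin (2*k+1), (r:ℕ) ≠ 2*k → (r:ℕ) < (t:ℕ) →
      0 < Real.sin (ψ t - mid r) := by
    intro r hr t hwr hlt'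
    have hgap := hIncδ r hr
    have h3 : δf r = ψ (r+1) - ψ r := by
      simp only [hδdef, hWdef]; rw [if_neg hwr]; ring
    rw [h3] at hgap
    have h1 : ψ (r+1) ≤ ψ t := by
      apply hψmono
      rw [hvaladd r hwr]
      omega
    apply Real.sin_pos_of_pos_of_lt_pi
    · simp only [hmiddef, hWdef]
      rw [if_neg hwr]
      linarith
    · simp only [hmiddef, hWdef]
      rw [if_neg hwr]
      have h2 := hψπ t
      have h4 := hψ0 r
      have h5 := hψ0 (r+1)
      linarith
  have hfacne : ∀ t : Fin (2*k+1), ∀ r ∈ Inc, Real.sin (ψ t - mid r) ≠ 0 := by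
    intro t r hr
    by_cases hwr : (r:ℕ) = 2*k
    · exact ne_of_lt (hfacneg r hr t (Or.inl hwr))
    · rcases le_or_gt (t:ℕ) (r:ℕ) with h | h
      · exact ne_of_lt (hfacneg r hr t (Or.inr h))
      · exact ne_of_gt (hfacpos r hr t hwr h)
  -- the products
  set Q : Fin (2*k+1) → ℝ := fun t => ∏ r ∈ Inc, Real.sin (θ (σ t) - mid r) with hQdef
  set G : Fin (2*k+1) → ℝ := fun t => ∏ r ∈ Inc, Real.sin (ψ t - mid r) with hGdef
  have hQG : ∀ t, Q t = s t * G t := by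
    intro t
    have hterm : ∀ r ∈ Inc, Real.sin (θ (σ t) - mid r) = s t * Real.sin (ψ t - mid r) := by
      intro r _
      simp only [hsdef]
      by_cases hneg : θ (σ t) < 0
      · rw [if_pos hneg]
        have h2 : θ (σ t) - mid r = (ψ t - mid r) - Real.pi := by
          have := hθφ (σ t)
          rw [if_pos hneg] at this
          simp only [hψdef]
          linarith
        rw [h2, Real.sin_sub_pi]
        ring
      · rw [if_neg hneg]
        have h2 : θ (σ t) - mid r = ψ t - mid r := by
          have := hθφ (σ t)
          rw [if_neg hneg] at this
          simp only [hψdef]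
          linarith
        rw [h2, one_mul]
    simp only [hQdef, hGdef]
    rw [Finset.prod_congr rfl hterm, Finset.prod_mul_distrib, Finset.prod_const]
    congr 1
    rcases hs1 t with h | h <;> rw [h]
    · exact one_pow _
    · exact Odd.neg_one_pow hIodd
  have hGne : ∀ t, G t ≠ 0 := by
    intro t
    simp only [hGdef]
    rw [Finset.prod_ne_zero_iff]
    exact fun r hr => hfacne t r hr
  have hQne : ∀ t, Q t ≠ 0 := by
    intro t
    rw [hQG t]
    exact mul_ne_zero (hsne t) (hGne t)
  -- consecutive products positive
  have hcons : ∀ t : Fin (2*k+1), (t:ℕ) ≠ 2*k → 0 < Q t * Q (t+1) := by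
    intro t ht
    have hval := hvaladd t ht
    rw [hQG t, hQG (t+1)]
    have hrearr : (s t * G t) * (s (t+1) * G (t+1)) = (s t * s (t+1)) * (G t * G (t+1)) := by ring
    rw [hrearr]
    have hGG : G t * G (t+1)
        = ∏ r ∈ Inc, (Real.sin (ψ t - mid r) * Real.sin (ψ (t+1) - mid r)) := by
      simp only [hGdef]
      rw [← Finset.prod_mul_distrib]
    rw [hGG]
    have hothers : ∀ r ∈ Inc, r ≠ t →
        0 < Real.sin (ψ t - mid r) * Real.sin (ψ (t+1) - mid r) := by
      intro r hr hrt
      by_cases hwr : (r:ℕ) = 2*k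
      · exact mul_pos_of_neg_of_neg (hfacneg r hr t (Or.inl hwr)) (hfacneg r hr (t+1) (Or.inl hwr))
      · rcases lt_or_ge (t:ℕ) (r:ℕ) with h | h
        · have h2 : ((t+1 : Fin (2*k+1)):ℕ) ≤ (r:ℕ) := by rw [hval]; omega
          exact mul_pos_of_neg_of_neg (hfacneg r hr t (Or.inr h.le)) (hfacneg r hr (t+1) (Or.inr h2))
        · have h1 : (r:ℕ) < (t:ℕ) := by
            rcases lt_or_eq_of_le h with h' | h'
            · exact h'
            · exact absurd (Fin.ext h') hrt
          have h2 : (r:ℕ) < ((t+1 : Fin (2*k+1)):ℕ) := by rw [hval]; omega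
          exact mul_pos (hfacpos r hr t hwr h1) (hfacpos r hr (t+1) hwr h2)
    by_cases hmem : t ∈ Inc
    · have hst : s t * s (t+1) = -1 := by
        have hxval := hxneg t hmem
        simp only [hxdef] at hxval
        rw [if_neg ht, one_mul] at hxval
        exact hxval
      have hneg : Real.sin (ψ t - mid t) * Real.sin (ψ (t+1) - mid t) < 0 := by
        apply mul_neg_of_neg_of_pos
        · exact hfacneg t hmem t (Or.inr le_rfl)
        · exact hfacpos t hmem (t+1) ht (by rw [hval]; omega)
      rw [← Finset.mul_prod_erase _ _ hmem]
      have hpose : 0 < ∏ r ∈ Inc.erase t,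
          (Real.sin (ψ t - mid r) * Real.sin (ψ (t+1) - mid r)) :=
        Finset.prod_pos fun r hr =>
          hothers r (Finset.mem_of_mem_erase hr) (Finset.ne_of_mem_erase hr)
      rw [hst]
      nlinarith [hneg, hpose]
    · have hst : s t * s (t+1) = 1 := by
        have hxval := hxpos t hmem
        simp only [hxdef] at hxval
        rw [if_neg ht, one_mul] at hxval
        exact hxval
      rw [hst, one_mul]
      exact Finset.prod_pos fun r hr => hothers r hr (fun h => hmem (h ▸ hr))
  -- chain
  have hchain : ∀ t : Fin (2*k+1), 0 < Q 0 * Q t := by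
    have hmain : ∀ m : ℕ, ∀ hm : m < 2*k+1, 0 < Q 0 * Q ⟨m, hm⟩ := by
      intro m
      induction m with
      | zero =>
        intro hm
        have h0 : (⟨0, hm⟩ : Fin (2*k+1)) = 0 := rfl
        rw [h0]
        exact mul_self_pos.mpr (hQne 0)
      | succ m ih =>
        intro hm
        have hm' : m < 2*k+1 := by omega
        have hmk : ((⟨m, hm'⟩ : Fin (2*k+1)):ℕ) ≠ 2*k := by
          rw [Fin.val_mk]
          omega
        have h1 := ih hm'
        have h2 := hcons ⟨m, hm'⟩ hmk
        have h3 : (⟨m, hm'⟩ : Fin (2*k+1)) + 1 = ⟨m+1, hm⟩ := by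
          apply Fin.ext
          rw [hvaladd _ hmk]
        rw [h3] at h2
        nlinarith [mul_self_pos.mpr (hQne ⟨m, hm'⟩), h1, h2]
    intro t
    have := hmain t.val t.isLt
    exact this
  -- from sorted positions back to indices
  have hRpos : ∀ i : Fin (2*k+1), 0 < Q 0 * ∏ r ∈ Inc, Real.sin (θ i - mid r) := by
    intro i
    have h2 : (∏ r ∈ Inc, Real.sin (θ i - mid r)) = Q (σ.symm i) := by
      simp only [hQdef]
      rw [Equiv.apply_symm_apply]
    rw [h2]
    exact hchain (σ.symm i)
  -- build the coefficients
  obtain ⟨c', hpar, hsupp, hcw⟩ := prodIm Inc.card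
    (fun j => (starRingEnd ℂ) (w 0) * Complex.exp (-(↑(mid ((Inc.orderIsoOfFin rfl j : _) : Fin (2*k+1)))) * Complex.I))
  have hww : w 0 * (starRingEnd ℂ) (w 0) = 1 := by
    rw [Complex.mul_conj]
    norm_cast
    rw [Complex.normSq_eq_norm_sq, hw 0]; norm_num
  have hImu : ∀ (i : Fin (2*k+1)) (j : Fin Inc.card),
      (w i * ((starRingEnd ℂ) (w 0) * Complex.exp (-(↑(mid ((Inc.orderIsoOfFin rfl j : _) : Fin (2*k+1)))) * Complex.I))).im
      = Real.sin (θ i - mid ((Inc.orderIsoOfFin rfl j : _) : Fin (2*k+1))) := by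
    intro i j
    set α := mid ((Inc.orderIsoOfFin rfl j : _) : Fin (2*k+1)) with hα
    have hexp : Complex.exp (↑(θ i) * Complex.I) * Complex.exp (-(↑α) * Complex.I)
        = Complex.exp (↑(θ i - α) * Complex.I) := by
      rw [← Complex.exp_add]
      congr 1
      push_cast
      ring
    have hmul : w i * ((starRingEnd ℂ) (w 0) * Complex.exp (-(↑α) * Complex.I))
        = Complex.exp (↑(θ i - α) * Complex.I) := by
      rw [hwi i]
      calc w 0 * Complex.exp (↑(θ i) * Complex.I) * ((starRingEnd ℂ) (w 0) * Complex.exp (-(↑α) * Complex.I))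
          = (w 0 * (starRingEnd ℂ) (w 0))
            * (Complex.exp (↑(θ i) * Complex.I) * Complex.exp (-(↑α) * Complex.I)) := by ring
        _ = Complex.exp (↑(θ i - α) * Complex.I) := by rw [hww, one_mul, hexp]
    rw [hmul, Complex.exp_ofReal_mul_I_im]
  have hprodQ : ∀ i : Fin (2*k+1),
      (∏ j : Fin Inc.card, (w i * ((starRingEnd ℂ) (w 0) * Complex.exp (-(↑(mid ((Inc.orderIsoOfFin rfl j : _) : Fin (2*k+1)))) * Complex.I))).im)
      = ∏ r ∈ Inc, Real.sin (θ i - mid r) := by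
    intro i
    rw [Finset.prod_congr rfl (fun j _ => hImu i j)]
    have h2 := Fintype.prod_equiv (Inc.orderIsoOfFin rfl).toEquiv
      (fun j : Fin Inc.card => Real.sin (θ i - mid ((Inc.orderIsoOfFin rfl j : _) : Fin (2*k+1))))
      (fun r : {x // x ∈ Inc} => Real.sin (θ i - mid (r : Fin (2*k+1)))) (fun j => rfl)
    rw [h2, Finset.univ_eq_attach]
    exact Finset.prod_attach Inc (fun r => Real.sin (θ i - mid r))
  refine ⟨fun j' => (↑(Q 0) : ℂ) * c' (2*(j':ℕ)+1), ?_⟩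
  intro i
  have h1 := hcw (w i) (hw i)
  rw [hprodQ i] at h1
  have h2 : (∑ j' : Fin k, ((↑(Q 0) : ℂ) * c' (2*(j':ℕ)+1) * (w i)^(2*(j':ℕ)+1))).re
      = Q 0 * ∑ jj ∈ Finset.range (Inc.card+1), (c' jj * (w i)^jj).re := by
    rw [Complex.re_sum]
    have hterm : ∀ j' : Fin k, ((↑(Q 0):ℂ) * c' (2*(j':ℕ)+1) * (w i)^(2*(j':ℕ)+1)).re
        = Q 0 * (c' (2*(j':ℕ)+1) * (w i)^(2*(j':ℕ)+1)).re := by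
      intro j'
      rw [mul_assoc, Complex.re_ofReal_mul]
    rw [Finset.sum_congr rfl fun j' _ => hterm j', ← Finset.mul_sum]
    congr 1
    have hIle2k : Inc.card + 1 ≤ 2*k := by
      rcases hIodd with ⟨m, hm⟩
      omega
    have hpad : ∑ jj ∈ Finset.range (Inc.card+1), (c' jj * (w i)^jj).re
        = ∑ jj ∈ Finset.range (2*k), (c' jj * (w i)^jj).re := by
      apply Finset.sum_subset
      · intro a ha
        rw [Finset.mem_range] at *
        omega
      · intro a _ ha
        rw [Finset.mem_range] at ha
        push_neg at ha
        rw [hsupp a (by omega)]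
        simp
    rw [hpad, sum_range_two_mul k (fun jj => (c' jj * (w i)^jj).re)]
    have heven : ∀ j ∈ Finset.range k,
        ((c' (2*j) * (w i)^(2*j)).re + (c' (2*j+1) * (w i)^(2*j+1)).re)
        = (c' (2*j+1) * (w i)^(2*j+1)).re := by
      intro j _
      have hodd2 : Inc.card % 2 = 1 := Nat.odd_iff.mp hIodd
      have hz : c' (2*j) = 0 := hpar _ (by omega)
      simp [hz]
    rw [Finset.sum_congr rfl heven, Fin.sum_univ_eq_sum_range (fun j => (c' (2*j+1) * (w i)^(2*j+1)).re)]
  rw [h2, ← h1]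
  exact hRpos i

/-- The arc-length metric on the unit circle in `ℂ`: for unit complex numbers `z, w`
we have `circleDist z (exp (θ * I) * z) = |θ|` whenever `|θ| ≤ π`. -/
noncomputable def circleDist (z w : ℂ) : ℝ := |Complex.arg (w / z)|

/-- Example 2.3 of the paper. Let `g : S¹ → ℂ^k` be evaluation of the
odd monomials `z, z³, …, z^{2k-1}`. If `w₀, …, w_{2k}` are points of the circle such that
`0` lies in the real convex hull of the `g(wᵢ)`, then some two of the `wᵢ` are at
arc-distance at least `π - π/(2k+1)`. -/
theorem stmt3 (k : ℕ) (hk : 1 ≤ k)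
    (w : Fin (2 * k + 1) → ℂ) (hw : ∀ i, ‖w i‖ = 1)
    (h0 : (0 : Fin k → ℂ) ∈
      convexHull ℝ (Set.range fun i : Fin (2 * k + 1) =>
        (fun j : Fin k => (w i) ^ (2 * (j : ℕ) + 1) : Fin k → ℂ))) :
    ∃ i j, i ≠ j ∧ Real.pi - Real.pi / (2 * k + 1) ≤ circleDist (w i) (w j) := by
  by_contra hcon
  push_neg at hcon
  obtain ⟨c, hc⟩ := sep k hk w hw (fun i j hij => by
    have h2 := hcon i j hij
    rw [circleDist] at h2
    exact h2)
  rw [convexHull_range_eq_exists_affineCombination] at h0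
  obtain ⟨t, wt, hwt0, hwt1, hwt2⟩ := h0
  rw [Finset.affineCombination_eq_linear_combination _ _ _ hwt1] at hwt2
  have hcoord : ∀ j : Fin k, ∑ i ∈ t, ((wt i : ℂ) * (w i)^(2*(j:ℕ)+1)) = 0 := by
    intro j
    have h2 := congrFun hwt2 j
    rw [Finset.sum_apply] at h2
    simp only [Pi.smul_apply, Complex.real_smul, Pi.zero_apply] at h2
    exact h2
  have hzero : ∑ i ∈ t, wt i * (∑ j : Fin k, (c j * (w i)^(2*(j:ℕ)+1))).re = 0 := by
    have h3 : ∀ i, wt i * (∑ j : Fin k, (c j * (w i)^(2*(j:ℕ)+1))).re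
        = (∑ j : Fin k, ((wt i:ℂ) * (c j * (w i)^(2*(j:ℕ)+1)))).re := by
      intro i
      rw [Complex.re_sum, Complex.re_sum, Finset.mul_sum]
      apply Finset.sum_congr rfl
      intro j _
      exact (Complex.re_ofReal_mul _ _).symm
    rw [Finset.sum_congr rfl (fun i _ => h3 i), ← Complex.re_sum]
    have h4 : ∑ i ∈ t, ∑ j : Fin k, ((wt i:ℂ) * (c j * (w i)^(2*(j:ℕ)+1)))
        = ∑ j : Fin k, c j * ∑ i ∈ t, ((wt i:ℂ) * (w i)^(2*(j:ℕ)+1)) := by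
      rw [Finset.sum_comm]
      apply Finset.sum_congr rfl
      intro j _
      rw [Finset.mul_sum]
      apply Finset.sum_congr rfl
      intro i _
      ring
    rw [h4]
    have h5 : ∀ j : Fin k, c j * ∑ i ∈ t, ((wt i:ℂ) * (w i)^(2*(j:ℕ)+1)) = 0 := by
      intro j
      rw [hcoord j, mul_zero]
    rw [Finset.sum_congr rfl (fun j _ => h5 j)]
    simp
  have hpos : 0 < ∑ i ∈ t, wt i * (∑ j : Fin k, (c j * (w i)^(2*(j:ℕ)+1))).re := by
    have hex : ∃ i ∈ t, 0 < wt i := by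
      by_contra hno
      push_neg at hno
      have hzz : ∑ i ∈ t, wt i = 0 :=
        Finset.sum_eq_zero fun i hi => le_antisymm (hno i hi) (hwt0 i hi)
      rw [hwt1] at hzz
      norm_num at hzz
    obtain ⟨i₀, hi₀, hwt₀⟩ := hex
    apply Finset.sum_pos'
    · intro i hi
      exact mul_nonneg (hwt0 i hi) (hc i).le
    · exact ⟨i₀, hi₀, mul_pos hwt₀ (hc i₀)⟩
  linarith [hzero, hpos]
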